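/- The point (-1:1:1:1:1) is a singular point (node) of the Burkhardt quartic B, i.e., all five partial derivatives of f = y0*(y0^3+y1^3+y2^3+y3^3+y4^3)+3*y1*y2*y3*y4 vanish there, and f itself vanishes; moreover in characteristic q with q ≡ 2 mod 3 its tangent cone quadric is non-split over F_q. -/

import Mathlib

open MvPolynomial

set_option maxRecDepth 10000
set_option maxHeartbeats 1000000

/-- The defining quartic of the Burkhardt quartic threefold `B ⊂ ℙ⁴`, over `ℤ`. -/
noncomputable def burkhardtPoly : MvPolynomial (Fin 5) ℤ :=
  X 0 * (X 0 ^ 3 + X 1 ^ 3 + X 2 ^ 3 + X 3 ^ 3 + X 4 ^ 3) + 3 * (X 1 * X 2 * X 3 * X 4)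

/-- The node `n = (-1:1:1:1:1)` (as an affine vector). -/
def nodePt : Fin 5 → ℤ := ![-1, 1, 1, 1, 1]

/-- The tangent cone quadric of `B` at the node: the degree-2 homogeneous component of
`f(n + u)` as a polynomial in `u`. -/
noncomputable def tangentConeQuadric : MvPolynomial (Fin 5) ℤ :=
  homogeneousComponent 2 (bind₁ (fun i => X i + C (nodePt i)) burkhardtPoly)

section TangentCone

/-- Explicit form of the tangent cone quadric. -/
noncomputable def Qexp : MvPolynomial (Fin 5) ℤ :=
  C 3 * ((C 2 * X 0 - X 1 + X 2 + X 3 + X 4) * (X 0 + X 1)) -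
  C 3 * ((X 2 - X 4) ^ 2 - (X 2 - X 4) * (X 3 - X 4) + (X 3 - X 4) ^ 2)

noncomputable def Q3exp : MvPolynomial (Fin 5) ℤ :=
  C 3 * X 0 * (X 1 ^ 2 + X 2 ^ 2 + X 3 ^ 2 + X 4 ^ 2)
  - (X 1 ^ 3 + X 2 ^ 3 + X 3 ^ 3 + X 4 ^ 3)
  + C 3 * (X 2 * X 3 * X 4 + X 1 * X 3 * X 4 + X 1 * X 2 * X 4 + X 1 * X 2 * X 3)
  - C 4 * X 0 ^ 3

theorem hsplit : bind₁ (fun i => X i + C (nodePt i)) burkhardtPoly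
    = Qexp + Q3exp + burkhardtPoly := by
  simp only [burkhardtPoly, Qexp, Q3exp]
  simp only [map_add, map_mul, map_pow, bind₁_X_right, map_ofNat]
  simp only [nodePt, Matrix.cons_val]
  norm_num
  ring

theorem hQ2 : Qexp.IsHomogeneous 2 := by
  have hX : ∀ i : Fin 5, (X i : MvPolynomial (Fin 5) ℤ).IsHomogeneous 1 :=
    fun i => isHomogeneous_X _ _
  exact ((isHomogeneous_C _ _).mul ((((((isHomogeneous_C_mul_X 2 0).sub (hX 1)).add
    (hX 2)).add (hX 3)).add (hX 4)).mul ((hX 0).add (hX 1)))).sub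
    ((isHomogeneous_C _ _).mul (((((hX 2).sub (hX 4)).pow 2).sub
      (((hX 2).sub (hX 4)).mul ((hX 3).sub (hX 4)))).add (((hX 3).sub (hX 4)).pow 2)))

theorem hQ3 : Q3exp.IsHomogeneous 3 := by
  have hX : ∀ i : Fin 5, (X i : MvPolynomial (Fin 5) ℤ).IsHomogeneous 1 :=
    fun i => isHomogeneous_X _ _
  have c3 : ∀ i j k : Fin 5, ((X i * X j * X k : MvPolynomial (Fin 5) ℤ)).IsHomogeneous 3 :=
    fun i j k => ((hX i).mul (hX j)).mul (hX k)
  have p3 : ∀ i : Fin 5, ((X i ^ 3 : MvPolynomial (Fin 5) ℤ)).IsHomogeneous 3 :=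
    fun i => (hX i).pow 3
  have p2 : ∀ i : Fin 5, ((X i ^ 2 : MvPolynomial (Fin 5) ℤ)).IsHomogeneous 2 :=
    fun i => (hX i).pow 2
  exact ((((isHomogeneous_C _ _).mul (hX 0)).mul ((((p2 1).add (p2 2)).add (p2 3)).add
    (p2 4))).sub ((((p3 1).add (p3 2)).add (p3 3)).add (p3 4))).add
    ((isHomogeneous_C _ _).mul ((((c3 2 3 4).add (c3 1 3 4)).add (c3 1 2 4)).add (c3 1 2 3)))
    |>.sub ((isHomogeneous_C _ _).mul (p3 0))

theorem hQ4 : burkhardtPoly.IsHomogeneous 4 := by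
  have hX : ∀ i : Fin 5, (X i : MvPolynomial (Fin 5) ℤ).IsHomogeneous 1 :=
    fun i => isHomogeneous_X _ _
  have p3 : ∀ i : Fin 5, ((X i ^ 3 : MvPolynomial (Fin 5) ℤ)).IsHomogeneous 3 :=
    fun i => (hX i).pow 3
  have h3 : (3 : MvPolynomial (Fin 5) ℤ) = C 3 := (map_ofNat C 3).symm
  rw [burkhardtPoly, h3]
  exact ((hX 0).mul ((((((p3 0).add (p3 1)).add (p3 2)).add (p3 3)).add (p3 4)))).add
    ((isHomogeneous_C _ _).mul ((((hX 1).mul (hX 2)).mul (hX 3)).mul (hX 4)))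

theorem tcq_eq : tangentConeQuadric = Qexp := by
  rw [tangentConeQuadric, hsplit, map_add, map_add,
    homogeneousComponent_of_mem ((mem_homogeneousSubmodule _ _).mpr hQ2),
    homogeneousComponent_of_mem ((mem_homogeneousSubmodule _ _).mpr hQ3),
    homogeneousComponent_of_mem ((mem_homogeneousSubmodule _ _).mpr hQ4)]
  norm_num

end TangentCone

section FieldLemmas

lemma charNeThree (F : Type) [Field F] [Fintype F] (hq : Fintype.card F % 3 = 2) :
    (3 : F) ≠ 0 := by
  intro h0
  have hchar : CharP F (ringChar F) := ringChar.charP F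
  have hdvd : ringChar F ∣ 3 :=
    (CharP.cast_eq_zero_iff F (ringChar F) 3).mp (by exact_mod_cast h0)
  have hp : (ringChar F).Prime := CharP.char_is_prime F (ringChar F)
  have h3 : ringChar F = 3 := (Nat.prime_dvd_prime_iff_eq hp Nat.prime_three).mp hdvd
  obtain ⟨n, _, hcard⟩ := FiniteField.card F (ringChar F)
  rw [h3] at hcard
  have hdvd3 : 3 ∣ Fintype.card F := hcard ▸ dvd_pow_self 3 n.pos.ne'
  omega

lemma factA (F : Type) [Field F] [Fintype F] (hq : Fintype.card F % 3 = 2) :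
    ∀ t : F, t ^ 2 + t + 1 ≠ 0 := by
  classical
  have h3F : (3 : F) ≠ 0 := charNeThree F hq
  intro t ht
  have ht0 : t ≠ 0 := by rintro rfl; simp at ht
  have ht3 : t ^ 3 = 1 := by linear_combination (t - 1) * ht
  set u : Fˣ := Units.mk0 t ht0 with hu
  have hu3 : u ^ 3 = 1 := by ext; push_cast [hu]; exact ht3
  have hord : orderOf u ∣ 3 := orderOf_dvd_of_pow_eq_one hu3
  have hcard : orderOf u ∣ Fintype.card F - 1 := by
    simpa [Fintype.card_units] using orderOf_dvd_card (x := u)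
  rcases (Nat.prime_three.eq_one_or_self_of_dvd _ hord) with h1 | h3
  · have hu1 : u = 1 := orderOf_eq_one_iff.mp h1
    have ht1 : t = 1 := by simpa [hu] using congrArg Units.val hu1
    rw [ht1] at ht
    exact h3F (by linear_combination ht)
  · have hc1 : 1 ≤ Fintype.card F := Fintype.card_pos
    rw [h3] at hcard
    omega

lemma aniso {F : Type} [Field F] (hA : ∀ t : F, t ^ 2 + t + 1 ≠ 0) (c d : F)
    (h : c ^ 2 - c * d + d ^ 2 = 0) : c = 0 ∧ d = 0 := by
  by_cases hd : d = 0
  · subst hd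
    refine ⟨?_, rfl⟩
    have hc2 : c ^ 2 = 0 := by linear_combination h
    exact pow_eq_zero_iff (n := 2) (by norm_num) |>.mp hc2
  · exfalso
    apply hA (-(c / d))
    have key : (-(c / d)) ^ 2 + (-(c / d)) + 1 = (c ^ 2 - c * d + d ^ 2) / d ^ 2 := by
      field_simp
      ring
    rw [key, h, zero_div]

end FieldLemmas

lemma key_dep {F : Type} [Field F] (hA : ∀ t : F, t ^ 2 + t + 1 ≠ 0)
    (a1 b1 c1 d1 a2 b2 c2 d2 : F)
    (hind : ∀ α β : F, α * a1 + β * a2 = 0 → α * b1 + β * b2 = 0 →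
      α * c1 + β * c2 = 0 → α * d1 + β * d2 = 0 → α = 0 ∧ β = 0)
    (hq : ∀ α β : F, (α * a1 + β * a2) * (α * b1 + β * b2) =
      (α * c1 + β * c2) ^ 2 - (α * c1 + β * c2) * (α * d1 + β * d2) + (α * d1 + β * d2) ^ 2)
    (α β : F) (hα : α ≠ 0) (hc : α * c1 + β * c2 = 0) (hd : α * d1 + β * d2 = 0)
    (hne : ¬(c2 = 0 ∧ d2 = 0)) : False := by
  set a := α * a1 + β * a2 with ha'
  set b := α * b1 + β * b2 with hb'
  have hab : a * b = 0 := by rw [ha', hb', hq α β, hc, hd]; ring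
  have hnz : ¬(a = 0 ∧ b = 0) := by
    rintro ⟨h1, h2⟩
    exact hα ((hind α β (ha' ▸ h1) (hb' ▸ h2) hc hd).1)
  have e2 := hq 0 1
  have e3 := hq α (1 + β)
  simp only [zero_mul, one_mul, zero_add] at e2
  have ea : α * a1 + (1 + β) * a2 = a + a2 := by rw [ha']; ring
  have eb : α * b1 + (1 + β) * b2 = b + b2 := by rw [hb']; ring
  have ec : α * c1 + (1 + β) * c2 = c2 := by linear_combination hc
  have ed : α * d1 + (1 + β) * d2 = d2 := by linear_combination hd
  rw [ea, eb, ec, ed] at e3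
  have cross : a * b2 + a2 * b = 0 := by linear_combination e3 - e2 - hab
  rcases mul_eq_zero.mp hab with h0 | h0
  · have hbne : b ≠ 0 := fun hb0 => hnz ⟨h0, hb0⟩
    have ha2 : a2 = 0 := by
      have h' : a2 * b = 0 := by linear_combination cross - b2 * h0
      rcases mul_eq_zero.mp h' with h | h
      · exact h
      · exact absurd h hbne
    exact hne (aniso hA c2 d2 (by linear_combination -e2 + b2 * ha2))
  · have hane : a ≠ 0 := fun ha0 => hnz ⟨ha0, h0⟩
    have hb2 : b2 = 0 := by
      have h' : a * b2 = 0 := by linear_combination cross - a2 * h0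
      rcases mul_eq_zero.mp h' with h | h
      · exact absurd h hane
      · exact h
    exact hne (aniso hA c2 d2 (by linear_combination -e2 + a2 * hb2))

lemma key {F : Type} [Field F] (hA : ∀ t : F, t ^ 2 + t + 1 ≠ 0)
    (a1 b1 c1 d1 a2 b2 c2 d2 : F)
    (hind : ∀ α β : F, α * a1 + β * a2 = 0 → α * b1 + β * b2 = 0 →
      α * c1 + β * c2 = 0 → α * d1 + β * d2 = 0 → α = 0 ∧ β = 0)
    (hq : ∀ α β : F, (α * a1 + β * a2) * (α * b1 + β * b2) =
      (α * c1 + β * c2) ^ 2 - (α * c1 + β * c2) * (α * d1 + β * d2) + (α * d1 + β * d2) ^ 2) :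
    False := by
  by_cases hD : c1 * d2 - c2 * d1 = 0
  · by_cases h2 : c2 = 0 ∧ d2 = 0
    · by_cases h1 : c1 = 0 ∧ d1 = 0
      · obtain ⟨hc1, hd1⟩ := h1; obtain ⟨hc2, hd2⟩ := h2
        subst hc1; subst hd1; subst hc2; subst hd2
        have hq' : ∀ α β : F, (α * a1 + β * a2) * (α * b1 + β * b2) = 0 := by
          intro α β; rw [hq α β]; ring
        have h11 : a1 * b1 = 0 := by have := hq' 1 0; simpa using this
        rcases mul_eq_zero.mp h11 with ha1 | hb1
        · have hb1 : b1 ≠ 0 := by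
            intro hb1
            simpa using (hind 1 0 (by simp [ha1]) (by simp [hb1]) (by simp) (by simp)).1
          have ha2 : a2 = 0 := by
            by_contra ha2
            have e1 : a2 * b2 = 0 := by have := hq' 0 1; simpa using this
            have hb2 : b2 = 0 := by
              rcases mul_eq_zero.mp e1 with h | h
              · exact absurd h ha2
              · exact h
            have e2 : (a1 + a2) * (b1 + b2) = 0 := by
              have := hq' 1 1; simpa using this
            rw [ha1, hb2] at e2
            simp at e2
            rcases e2 with h | h
            · exact ha2 h
            · exact hb1 h
          have h' := hind b2 (-b1) (by rw [ha1, ha2]; ring) (by ring) (by ring) (by ring)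
          exact hb1 (neg_eq_zero.mp h'.2)
        · have ha1 : a1 ≠ 0 := by
            intro ha1
            simpa using (hind 1 0 (by simp [ha1]) (by simp [hb1]) (by simp) (by simp)).1
          have hb2 : b2 = 0 := by
            by_contra hb2
            have e1 : a2 * b2 = 0 := by have := hq' 0 1; simpa using this
            have ha2 : a2 = 0 := by
              rcases mul_eq_zero.mp e1 with h | h
              · exact h
              · exact absurd h hb2
            have e2 : (a1 + a2) * (b1 + b2) = 0 := by
              have := hq' 1 1; simpa using this
            rw [hb1, ha2] at e2
            simp at e2
            rcases e2 with h | h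
            · exact ha1 h
            · exact hb2 h
          have h' := hind a2 (-a1) (by ring) (by rw [hb1, hb2]; ring) (by ring) (by ring)
          exact ha1 (neg_eq_zero.mp h'.2)
      · -- (c1,d1) ≠ 0, (c2,d2) = 0 : swap the two vectors and use key_dep
        have hind' : ∀ α β : F, α * a2 + β * a1 = 0 → α * b2 + β * b1 = 0 →
            α * c2 + β * c1 = 0 → α * d2 + β * d1 = 0 → α = 0 ∧ β = 0 := by
          intro α β e1 e2 e3 e4
          exact (hind β α (by linear_combination e1) (by linear_combination e2)
            (by linear_combination e3) (by linear_combination e4)).symm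
        have hq' : ∀ α β : F, (α * a2 + β * a1) * (α * b2 + β * b1) =
            (α * c2 + β * c1) ^ 2 - (α * c2 + β * c1) * (α * d2 + β * d1) +
            (α * d2 + β * d1) ^ 2 := by
          intro α β; linear_combination hq β α
        exact key_dep hA a2 b2 c2 d2 a1 b1 c1 d1 hind' hq' 1 0 one_ne_zero
          (by simp [h2.1]) (by simp [h2.2]) h1
    · -- (c2,d2) ≠ 0
      rcases not_and_or.mp h2 with hc2 | hd2
      · exact key_dep hA a1 b1 c1 d1 a2 b2 c2 d2 hind hq c2 (-c1) hc2
          (by ring) (by linear_combination -hD) h2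
      · exact key_dep hA a1 b1 c1 d1 a2 b2 c2 d2 hind hq d2 (-d1) hd2
          (by linear_combination hD) (by ring) h2
  · -- independent (c,d)-parts
    have e1 : (d2 * a1 + -d1 * a2) * (d2 * b1 + -d1 * b2) = (c1 * d2 - c2 * d1) ^ 2 := by
      linear_combination hq d2 (-d1)
    have e2 : (-c2 * a1 + c1 * a2) * (-c2 * b1 + c1 * b2) = (c1 * d2 - c2 * d1) ^ 2 := by
      linear_combination hq (-c2) c1
    have e3 : ((d2 - c2) * a1 + (c1 - d1) * a2) * ((d2 - c2) * b1 + (c1 - d1) * b2)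
        = (c1 * d2 - c2 * d1) ^ 2 := by
      linear_combination hq (d2 - c2) (c1 - d1)
    have hsum : (d2 * a1 + -d1 * a2) * (-c2 * b1 + c1 * b2) +
        (-c2 * a1 + c1 * a2) * (d2 * b1 + -d1 * b2) = -((c1 * d2 - c2 * d1) ^ 2) := by
      linear_combination e3 - e1 - e2
    have hprod : ((d2 * a1 + -d1 * a2) * (-c2 * b1 + c1 * b2)) *
        ((-c2 * a1 + c1 * a2) * (d2 * b1 + -d1 * b2)) = ((c1 * d2 - c2 * d1) ^ 2) ^ 2 := by
      linear_combination ((-c2 * a1 + c1 * a2) * (-c2 * b1 + c1 * b2)) * e1 +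
        ((c1 * d2 - c2 * d1) ^ 2) * e2
    set u := (-c2 * a1 + c1 * a2) * (d2 * b1 + -d1 * b2) with hu
    set v := (d2 * a1 + -d1 * a2) * (-c2 * b1 + c1 * b2) with hv
    set E := (c1 * d2 - c2 * d1) ^ 2 with hE
    have hEne : E ≠ 0 := pow_ne_zero _ hD
    have hu2 : u ^ 2 + u * E + E ^ 2 = 0 := by linear_combination u * hsum - hprod
    apply hA (u / E)
    have expand : (u / E) ^ 2 + u / E + 1 = (u ^ 2 + u * E + E ^ 2) / E ^ 2 := by
      field_simp
    rw [expand, hu2, zero_div]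
section Glue

variable {F : Type} [Field F]

/-- The linear map cutting out the four linear forms `A, B, L3, L4`. -/
def phiMap (F : Type) [Field F] : (Fin 5 → F) →ₗ[F] (Fin 4 → F) where
  toFun w := ![2 * w 0 - w 1 + w 2 + w 3 + w 4, w 0 + w 1, w 2 - w 4, w 3 - w 4]
  map_add' u v := by
    funext i
    fin_cases i <;> simp [Matrix.cons_val_zero, Matrix.cons_val_one] <;> ring
  map_smul' c u := by
    funext i
    fin_cases i <;> simp [Matrix.cons_val_zero, Matrix.cons_val_one, smul_eq_mul] <;> ring

lemma phiMap_ker (h3F : (3 : F) ≠ 0) (w : Fin 5 → F) (hw : phiMap F w = 0) :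
    w ∈ Submodule.span F {(![-1, 1, 1, 1, 1] : Fin 5 → F)} := by
  have h0 := congrFun hw 0
  have h1 := congrFun hw 1
  have h2 := congrFun hw 2
  have h3 := congrFun hw 3
  simp [phiMap] at h0 h1 h2 h3
  have hw0 : w 0 = -w 1 := by linear_combination h1
  have hw2 : w 2 = w 4 := by linear_combination h2
  have hw3 : w 3 = w 4 := by linear_combination h3
  have hw4 : w 4 = w 1 := by
    have h4 : 3 * (w 4 - w 1) = 0 := by linear_combination h0 - 2 * h1 - h2 - h3
    rcases mul_eq_zero.mp h4 with h | h
    · exact absurd h h3F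
    · linear_combination h
  rw [Submodule.mem_span_singleton]
  refine ⟨w 1, ?_⟩
  funext i
  fin_cases i <;> simp <;>
    first
      | linear_combination -hw0
      | linear_combination -(hw2.trans hw4)
      | linear_combination -(hw3.trans hw4)
      | linear_combination -hw4

theorem part2 (F : Type) [Field F] [Fintype F] (hcard : Fintype.card F % 3 = 2) :
    ¬ ∃ W : Submodule F (Fin 5 → F), Module.finrank F W = 3 ∧
        ∀ w ∈ W, MvPolynomial.aeval w tangentConeQuadric = (0 : F) := by
  classical
  rintro ⟨W, hW3, hWv⟩
  have hA := factA F hcard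
  have h3F : (3 : F) ≠ 0 := charNeThree F hcard
  -- the quadric relation, in explicit form
  have hrel : ∀ w ∈ W,
      (phiMap F w 0) * (phiMap F w 1) =
      (phiMap F w 2) ^ 2 - (phiMap F w 2) * (phiMap F w 3) + (phiMap F w 3) ^ 2 := by
    intro w hw
    have h := hWv w hw
    rw [tcq_eq] at h
    simp only [Qexp, map_sub, map_add, map_mul, map_pow, MvPolynomial.aeval_X,
      map_ofNat] at h
    have h' : 3 * (((2 * w 0 - w 1 + w 2 + w 3 + w 4) * (w 0 + w 1)) -
        ((w 2 - w 4) ^ 2 - (w 2 - w 4) * (w 3 - w 4) + (w 3 - w 4) ^ 2)) = 0 := by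
      linear_combination h
    have h'' := (mul_eq_zero.mp h').resolve_left h3F
    simp only [phiMap, LinearMap.coe_mk, AddHom.coe_mk]
    simp only [Matrix.cons_val_zero, Matrix.cons_val_one, Matrix.head_cons,
      Matrix.cons_val_two, Matrix.tail_cons, Matrix.cons_val_three]
    linear_combination h''
  -- restriction of phi to W
  set f : W →ₗ[F] (Fin 4 → F) := (phiMap F).comp W.subtype with hf
  have hkerle : Module.finrank F (LinearMap.ker f) ≤ 1 := by
    have hmaple : (LinearMap.ker f).map W.subtype ≤
        Submodule.span F {(![-1, 1, 1, 1, 1] : Fin 5 → F)} := by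
      rintro x ⟨⟨w, hwW⟩, hk, rfl⟩
      exact phiMap_ker h3F w hk
    have hne : (![-1, 1, 1, 1, 1] : Fin 5 → F) ≠ 0 := by
      intro h
      have := congrFun h 1
      simp at this
    calc Module.finrank F (LinearMap.ker f)
        = Module.finrank F ((LinearMap.ker f).map W.subtype) :=
          (Submodule.finrank_map_subtype_eq W _).symm
      _ ≤ Module.finrank F (Submodule.span F {(![-1, 1, 1, 1, 1] : Fin 5 → F)}) :=
          Submodule.finrank_mono hmaple
      _ = 1 := finrank_span_singleton hne
  have hrank : 2 ≤ Module.finrank F (LinearMap.range f) := by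
    have := f.finrank_range_add_finrank_ker
    rw [hW3] at this
    omega
  -- the quadric relation holds on the range of `f`
  have hrange_rel : ∀ v ∈ LinearMap.range f,
      v 0 * v 1 = v 2 ^ 2 - v 2 * v 3 + v 3 ^ 2 := by
    rintro v ⟨⟨w, hwW⟩, rfl⟩
    exact hrel w hwW
  -- pick two independent vectors in the range
  let b := Module.finBasis F ↥(LinearMap.range f)
  have hfr : 2 ≤ Module.finrank F ↥(LinearMap.range f) := hrank
  let i0 : Fin (Module.finrank F ↥(LinearMap.range f)) := ⟨0, by omega⟩
  let i1 : Fin (Module.finrank F ↥(LinearMap.range f)) := ⟨1, by omega⟩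
  set x : Fin 4 → F := ((b i0 : ↥(LinearMap.range f)) : Fin 4 → F) with hx
  set y : Fin 4 → F := ((b i1 : ↥(LinearMap.range f)) : Fin 4 → F) with hy
  have hmem : ∀ α β : F, α • x + β • y ∈ LinearMap.range f := fun α β =>
    Submodule.add_mem _ (Submodule.smul_mem _ _ (b i0).2) (Submodule.smul_mem _ _ (b i1).2)
  have hli : LinearIndependent F
      (fun i => ((b i : ↥(LinearMap.range f)) : Fin 4 → F)) :=
    b.linearIndependent.map' (LinearMap.range f).subtype (Submodule.ker_subtype _)
  have hne01 : i0 ≠ i1 := by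
    intro h
    have := congrArg Fin.val h
    simp [i0, i1] at this
  have hinj : Function.Injective (![i0, i1] : Fin 2 → _) := by
    intro a b' hab
    fin_cases a <;> fin_cases b' <;> simp_all
  have hli2 := hli.comp ![i0, i1] hinj
  have hind : ∀ α β : F, α • x + β • y = 0 → α = 0 ∧ β = 0 := by
    intro α β h
    have hsum : ∑ i : Fin 2, (![α, β] : Fin 2 → F) i •
        (fun i => ((b (![i0, i1] i) : ↥(LinearMap.range f)) : Fin 4 → F)) i = 0 := by
      rw [Fin.sum_univ_two]
      simpa using h
    have := Fintype.linearIndependent_iff.mp hli2 ![α, β] hsum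
    exact ⟨by simpa using this 0, by simpa using this 1⟩
  have hq : ∀ α β : F, (α * x 0 + β * y 0) * (α * x 1 + β * y 1) =
      (α * x 2 + β * y 2) ^ 2 - (α * x 2 + β * y 2) * (α * x 3 + β * y 3) +
      (α * x 3 + β * y 3) ^ 2 := by
    intro α β
    have h := hrange_rel _ (hmem α β)
    simpa [Pi.add_apply, Pi.smul_apply, smul_eq_mul] using h
  have hind' : ∀ α β : F, α * x 0 + β * y 0 = 0 → α * x 1 + β * y 1 = 0 →
      α * x 2 + β * y 2 = 0 → α * x 3 + β * y 3 = 0 → α = 0 ∧ β = 0 := by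
    intro α β e0 e1 e2 e3
    apply hind α β
    funext i
    fin_cases i <;> simp [Pi.add_apply, Pi.smul_apply, smul_eq_mul] <;>
      first
        | linear_combination e0
        | linear_combination e1
        | linear_combination e2
        | linear_combination e3
  exact key hA (x 0) (x 1) (x 2) (x 3) (y 0) (y 1) (y 2) (y 3) hind' hq

end Glue

/-- The point `(-1:1:1:1:1)` is a node of the Burkhardt quartic: `f` and all five partial
derivatives vanish there.  Moreover, over a finite field `F_q` with `q ≡ 2 (mod 3)`, the
tangent cone quadric at this node is non-split: it contains no `3`-dimensional totally
isotropic linear subspace (equivalently, the ruling lines of the quadric cone are not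
defined over `F_q`). -/
theorem node_and_nonsplit_tangent_cone :
    (MvPolynomial.eval nodePt burkhardtPoly = 0 ∧
      ∀ i : Fin 5, MvPolynomial.eval nodePt (pderiv i burkhardtPoly) = 0) ∧
    (∀ (F : Type) [Field F] [Fintype F], Fintype.card F % 3 = 2 →
      ¬ ∃ W : Submodule F (Fin 5 → F), Module.finrank F W = 3 ∧
          ∀ w ∈ W, MvPolynomial.aeval w tangentConeQuadric = (0 : F)) := by
  refine ⟨⟨?_, ?_⟩, ?_⟩
  · simp [burkhardtPoly, nodePt]
  · have hp3 : ∀ i : Fin 5, pderiv i (3 : MvPolynomial (Fin 5) ℤ) = 0 := by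
      intro i; rw [← map_ofNat (C : ℤ →+* MvPolynomial (Fin 5) ℤ) 3, pderiv_C]
    intro i
    fin_cases i <;>
      simp [burkhardtPoly, nodePt, hp3, pderiv_mul, pderiv_pow, pderiv_X]
  · intro F _ _ hcard
    exact part2 F hcard
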